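/- For n ≥ 2, the linking forms on ℤ/2^{n-1} ⊕ ℤ/2^n ⊕ ℤ/2^n given (with respect to the standard generators, in block-diagonal form) by (1/2^{n-1}) ⊕ (1/2^n)[[0,1],[1,0]] and by (−3/2^{n-1}) ⊕ (1/2^n)[[2,1],[1,2]] are isomorphic as linked groups. An explicit isomorphism sends the standard basis (e_1, e_2, e_3) to (e_1 + 2e_2 − 2e_3, e_1 + e_2, e_1 − e_3). -/

import Mathlib

set_option maxHeartbeats 2000000 in
/-- For `n ≥ 2`, the linking forms on
`H = ℤ/2^(n-1) ⊕ ℤ/2^n ⊕ ℤ/2^n` given in block-diagonal form (with respect to the standard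
basis `e₁, e₂, e₃`) by `(1/2^(n-1)) ⊕ (1/2^n)[[0,1],[1,0]]` and by
`(-3/2^(n-1)) ⊕ (1/2^n)[[2,1],[1,2]]` are isomorphic as linked groups; an explicit isomorphism
sends `(e₁, e₂, e₃)` to `(e₁ + 2e₂ - 2e₃, e₁ + e₂, e₁ - e₃)`. -/
theorem stmt_12 (n : ℕ) (hn : 2 ≤ n)
    (l l' : (ZMod (2 ^ (n - 1)) × ZMod (2 ^ n) × ZMod (2 ^ n)) →+
      (ZMod (2 ^ (n - 1)) × ZMod (2 ^ n) × ZMod (2 ^ n)) →+ AddCircle (1 : ℚ))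
    (hsymm : ∀ x y, l x y = l y x) (hsymm' : ∀ x y, l' x y = l' y x)
    (h1 : l (1, 0, 0) (1, 0, 0) = ((1 / 2 ^ (n - 1) : ℚ) : AddCircle (1 : ℚ)))
    (h2 : l (1, 0, 0) (0, 1, 0) = 0)
    (h3 : l (1, 0, 0) (0, 0, 1) = 0)
    (h4 : l (0, 1, 0) (0, 1, 0) = 0)
    (h5 : l (0, 1, 0) (0, 0, 1) = ((1 / 2 ^ n : ℚ) : AddCircle (1 : ℚ)))
    (h6 : l (0, 0, 1) (0, 0, 1) = 0)
    (h1' : l' (1, 0, 0) (1, 0, 0) = ((-3 / 2 ^ (n - 1) : ℚ) : AddCircle (1 : ℚ)))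
    (h2' : l' (1, 0, 0) (0, 1, 0) = 0)
    (h3' : l' (1, 0, 0) (0, 0, 1) = 0)
    (h4' : l' (0, 1, 0) (0, 1, 0) = ((2 / 2 ^ n : ℚ) : AddCircle (1 : ℚ)))
    (h5' : l' (0, 1, 0) (0, 0, 1) = ((1 / 2 ^ n : ℚ) : AddCircle (1 : ℚ)))
    (h6' : l' (0, 0, 1) (0, 0, 1) = ((2 / 2 ^ n : ℚ) : AddCircle (1 : ℚ))) :
    ∃ f : (ZMod (2 ^ (n - 1)) × ZMod (2 ^ n) × ZMod (2 ^ n)) ≃+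
        (ZMod (2 ^ (n - 1)) × ZMod (2 ^ n) × ZMod (2 ^ n)),
      (∀ x y, l (f x) (f y) = l' x y) ∧
      f (1, 0, 0) = (1, 2, -2) ∧ f (0, 1, 0) = (1, 1, 0) ∧ f (0, 0, 1) = (1, 0, -1) := by
  obtain ⟨m, rfl⟩ : ∃ m, n = m + 1 := ⟨n - 1, by omega⟩
  have hm1 : 1 ≤ m := by omega
  simp only [Nat.add_sub_cancel] at h1 h5 h1' h4' h5' h6' ⊢
  set A := ZMod (2 ^ m) with hA
  set B := ZMod (2 ^ (m + 1)) with hB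
  haveI : NeZero (2 ^ m) := ⟨by positivity⟩
  haveI : NeZero (2 ^ (m + 1)) := ⟨by positivity⟩
  set H := (A × B × B) with hH
  set T1 : H := (1, 2, -2) with hT1
  set T2 : H := (1, 1, 0) with hT2
  set T3 : H := (1, 0, -1) with hT3
  -- casting facts
  have hcastB : ∀ k : ℤ, ((2 ^ (m + 1) : ℕ) : ℤ) ∣ k → ((k : ℤ) : B) = 0 := fun k hk =>
    (ZMod.intCast_zmod_eq_zero_iff_dvd k _).mpr hk
  have hcastA : ∀ k : ℤ, ((2 ^ m : ℕ) : ℤ) ∣ k → ((k : ℤ) : A) = 0 := fun k hk =>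
    (ZMod.intCast_zmod_eq_zero_iff_dvd k _).mpr hk
  -- kernel conditions
  have key1 : (zmultiplesHom H T1) ((2 ^ m : ℕ) : ℤ) = 0 := by
    rw [zmultiplesHom_apply]
    refine Prod.ext ?_ (Prod.ext ?_ ?_)
    · show ((2 ^ m : ℕ) : ℤ) • (1 : A) = 0
      rw [zsmul_eq_mul, mul_one, hcastA _ dvd_rfl]
    · show ((2 ^ m : ℕ) : ℤ) • (2 : B) = 0
      rw [zsmul_eq_mul, show (((2 ^ m : ℕ) : ℤ) : B) * 2 = (((2 ^ m * 2 : ℤ)) : B) by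
        push_cast; ring]
      exact hcastB _ ⟨1, by push_cast [pow_succ]; ring⟩
    · show ((2 ^ m : ℕ) : ℤ) • (-2 : B) = 0
      rw [zsmul_eq_mul, show (((2 ^ m : ℕ) : ℤ) : B) * (-2) = (((2 ^ m * (-2) : ℤ)) : B) by
        push_cast; ring]
      exact hcastB _ ⟨-1, by push_cast [pow_succ]; ring⟩
  have key2 : (zmultiplesHom H T2) ((2 ^ (m + 1) : ℕ) : ℤ) = 0 := by
    rw [zmultiplesHom_apply]
    refine Prod.ext ?_ (Prod.ext ?_ ?_)
    · show ((2 ^ (m + 1) : ℕ) : ℤ) • (1 : A) = 0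
      rw [zsmul_eq_mul, mul_one, hcastA _ ⟨2, by push_cast [pow_succ]; ring⟩]
    · show ((2 ^ (m + 1) : ℕ) : ℤ) • (1 : B) = 0
      rw [zsmul_eq_mul, mul_one, hcastB _ dvd_rfl]
    · show ((2 ^ (m + 1) : ℕ) : ℤ) • (0 : B) = 0
      exact smul_zero _
  have key3 : (zmultiplesHom H T3) ((2 ^ (m + 1) : ℕ) : ℤ) = 0 := by
    rw [zmultiplesHom_apply]
    refine Prod.ext ?_ (Prod.ext ?_ ?_)
    · show ((2 ^ (m + 1) : ℕ) : ℤ) • (1 : A) = 0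
      rw [zsmul_eq_mul, mul_one, hcastA _ ⟨2, by push_cast [pow_succ]; ring⟩]
    · show ((2 ^ (m + 1) : ℕ) : ℤ) • (0 : B) = 0
      exact smul_zero _
    · show ((2 ^ (m + 1) : ℕ) : ℤ) • (-1 : B) = 0
      rw [zsmul_eq_mul, show (((2 ^ (m + 1) : ℕ) : ℤ) : B) * (-1) = (((2 ^ (m + 1) * (-1) : ℤ)) : B) by
        push_cast; ring]
      exact hcastB _ ⟨-1, by push_cast; ring⟩
  set F1 : A →+ H := ZMod.lift (2 ^ m) ⟨zmultiplesHom H T1, key1⟩ with hF1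
  set F2 : B →+ H := ZMod.lift (2 ^ (m + 1)) ⟨zmultiplesHom H T2, key2⟩ with hF2
  set F3 : B →+ H := ZMod.lift (2 ^ (m + 1)) ⟨zmultiplesHom H T3, key3⟩ with hF3
  set f₀ : H →+ H :=
    F1.comp (AddMonoidHom.fst A (B × B)) +
      F2.comp ((AddMonoidHom.fst B B).comp (AddMonoidHom.snd A (B × B))) +
      F3.comp ((AddMonoidHom.snd B B).comp (AddMonoidHom.snd A (B × B))) with hf₀def
  have hf₀ : ∀ v : H, f₀ v = F1 v.1 + F2 v.2.1 + F3 v.2.2 := fun v => rfl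
  have hF1c : ∀ k : ℤ, F1 ((k : ℤ) : A) = k • T1 := fun k => by
    rw [hF1, ZMod.lift_coe]; rfl
  have hF2c : ∀ k : ℤ, F2 ((k : ℤ) : B) = k • T2 := fun k => by
    rw [hF2, ZMod.lift_coe]; rfl
  have hF3c : ∀ k : ℤ, F3 ((k : ℤ) : B) = k • T3 := fun k => by
    rw [hF3, ZMod.lift_coe]; rfl
  have hvalA : ∀ a : A, (((a.val : ℤ)) : A) = a := fun a => by
    rw [Int.cast_natCast]; exact ZMod.natCast_rightInverse a
  have hvalB : ∀ b : B, (((b.val : ℤ)) : B) = b := fun b => by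
    rw [Int.cast_natCast]; exact ZMod.natCast_rightInverse b
  have hfv : ∀ x y z : ℤ, f₀ (((x : A), (y : B), (z : B)) : H) = x • T1 + y • T2 + z • T3 := by
    intro x y z
    rw [hf₀, hF1c, hF2c, hF3c]
  -- values on generators
  have hfe1 : f₀ ((1, 0, 0) : H) = T1 := by
    have := hfv 1 0 0
    simpa using this
  have hfe2 : f₀ ((0, 1, 0) : H) = T2 := by
    have := hfv 0 1 0
    simpa using this
  have hfe3 : f₀ ((0, 0, 1) : H) = T3 := by
    have := hfv 0 0 1
    simpa using this
  -- injectivity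
  have hinj : Function.Injective f₀ := by
    rw [injective_iff_map_eq_zero]
    rintro ⟨a, b, c⟩ hv
    rw [show ((a, b, c) : H) = (((a.val : ℤ) : A), ((b.val : ℤ) : B), ((c.val : ℤ) : B)) by
      rw [hvalA, hvalB, hvalB], hfv] at hv
    set x := (a.val : ℤ)
    set y := (b.val : ℤ)
    set z := (c.val : ℤ)
    have hv1 : ((x + y + z : ℤ) : A) = 0 := by
      have := congrArg Prod.fst hv
      simp only [Prod.fst_add, Prod.smul_fst, Prod.fst_zero, hT1, hT2, hT3] at this
      rw [show ((x + y + z : ℤ) : A) = x • (1 : A) + y • (1 : A) + z • (1 : A) by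
        push_cast [zsmul_eq_mul]; ring]
      exact this
    have hv2 : ((2 * x + y : ℤ) : B) = 0 := by
      have := congrArg (fun v : H => v.2.1) hv
      simp only [Prod.snd_add, Prod.fst_add, Prod.smul_snd, Prod.smul_fst, hT1, hT2, hT3] at this
      rw [show ((2 * x + y : ℤ) : B) = x • (2 : B) + y • (1 : B) + z • (0 : B) by
        simp only [zsmul_eq_mul]; push_cast; ring]
      exact this
    have hv3 : ((2 * x + z : ℤ) : B) = 0 := by
      have := congrArg (fun v : H => v.2.2) hv
      simp only [Prod.snd_add, Prod.smul_snd, hT1, hT2, hT3] at this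
      have h' : x • (-2 : B) + y • (0 : B) + z • (-1 : B) = 0 := this
      rw [show ((2 * x + z : ℤ) : B) = -(x • (-2 : B) + y • (0 : B) + z • (-1 : B)) by
        simp only [zsmul_eq_mul]; push_cast; ring, h', neg_zero]
    have d1 : ((2 ^ m : ℕ) : ℤ) ∣ x + y + z := (ZMod.intCast_zmod_eq_zero_iff_dvd _ _).mp hv1
    have d2 : ((2 ^ (m + 1) : ℕ) : ℤ) ∣ 2 * x + y := (ZMod.intCast_zmod_eq_zero_iff_dvd _ _).mp hv2
    have d3 : ((2 ^ (m + 1) : ℕ) : ℤ) ∣ 2 * x + z := (ZMod.intCast_zmod_eq_zero_iff_dvd _ _).mp hv3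
    have hsub : ((2 ^ m : ℕ) : ℤ) ∣ ((2 ^ (m + 1) : ℕ) : ℤ) := by
      push_cast [pow_succ]; exact ⟨2, rfl⟩
    have d2' := hsub.trans d2
    have d3' := hsub.trans d3
    have dx3 : ((2 ^ m : ℕ) : ℤ) ∣ 3 * x := by
      have h' : 3 * x = (2 * x + y) + (2 * x + z) - (x + y + z) := by ring
      rw [h']
      exact dvd_sub (dvd_add d2' d3') d1
    have cop : IsCoprime ((2 ^ m : ℕ) : ℤ) (3 : ℤ) := by
      rw [Int.isCoprime_iff_gcd_eq_one, show (3 : ℤ) = ((3 : ℕ) : ℤ) from rfl,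
        Int.gcd_natCast_natCast]
      exact Nat.Coprime.pow_left m (by decide)
    have dx : ((2 ^ m : ℕ) : ℤ) ∣ x := cop.dvd_of_dvd_mul_left dx3
    have d2x : ((2 ^ (m + 1) : ℕ) : ℤ) ∣ 2 * x := by
      obtain ⟨t, ht⟩ := dx
      exact ⟨t, by rw [ht]; push_cast [pow_succ]; ring⟩
    have dy : ((2 ^ (m + 1) : ℕ) : ℤ) ∣ y := by
      have h' : y = (2 * x + y) - 2 * x := by ring
      rw [h']; exact dvd_sub d2 d2x
    have dz : ((2 ^ (m + 1) : ℕ) : ℤ) ∣ z := by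
      have h' : z = (2 * x + z) - 2 * x := by ring
      rw [h']; exact dvd_sub d3 d2x
    have ha : a = 0 := by rw [← hvalA a]; exact hcastA _ dx
    have hb : b = 0 := by rw [← hvalB b]; exact hcastB _ dy
    have hc : c = 0 := by rw [← hvalB c]; exact hcastB _ dz
    simp [ha, hb, hc]; rfl
  have hbij : Function.Bijective f₀ := Finite.injective_iff_bijective.mp hinj
  -- decompositions
  have decT1 : T1 = ((1, 0, 0) : H) + (2 : ℤ) • ((0, 1, 0) : H) + (-2 : ℤ) • ((0, 0, 1) : H) := by
    refine Prod.ext ?_ (Prod.ext ?_ ?_) <;> simp [hT1]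
  have decT2 : T2 = ((1, 0, 0) : H) + ((0, 1, 0) : H) := by
    refine Prod.ext ?_ (Prod.ext ?_ ?_) <;> simp [hT2]
  have decT3 : T3 = ((1, 0, 0) : H) + (-1 : ℤ) • ((0, 0, 1) : H) := by
    refine Prod.ext ?_ (Prod.ext ?_ ?_) <;> simp [hT3]
  -- symmetric versions
  have h2s : l ((0, 1, 0) : H) ((1, 0, 0) : H) = 0 := (hsymm _ _).trans h2
  have h3s : l ((0, 0, 1) : H) ((1, 0, 0) : H) = 0 := (hsymm _ _).trans h3
  have h5s : l ((0, 0, 1) : H) ((0, 1, 0) : H) = ((1 / 2 ^ (m + 1) : ℚ) : AddCircle (1 : ℚ)) :=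
    (hsymm _ _).trans h5
  -- rational to circle helper
  have hq : ∀ q r : ℚ, q = r → ((q : ℚ) : AddCircle (1 : ℚ)) = ((r : ℚ) : AddCircle (1 : ℚ)) :=
    fun q r h => by rw [h]
  have hzc : ∀ (k : ℤ) (q : ℚ), k • ((q : ℚ) : AddCircle (1 : ℚ)) = ((k * q : ℚ) : AddCircle (1 : ℚ)) := by
    intro k q
    rw [← zsmul_eq_mul]
    rfl
  have h2pos : (0 : ℚ) < 2 ^ m := by positivity
  -- the nine base identities
  have base11 : l (f₀ (1, 0, 0)) (f₀ (1, 0, 0)) = l' (1, 0, 0) (1, 0, 0) := by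
    rw [hfe1, h1', decT1]
    simp only [map_add, map_zsmul, AddMonoidHom.add_apply, AddMonoidHom.smul_apply,
      h1, h2, h3, h2s, h3s, h4, h5, h5s, h6, smul_zero, add_zero, zero_add]
    rw [hzc, hzc, hzc, hzc]
    push_cast
    apply hq
    rw [pow_succ]
    field_simp
    ring

  have hadd : ∀ q r : ℚ, ((q : ℚ) : AddCircle (1 : ℚ)) + ((r : ℚ) : AddCircle (1 : ℚ)) =
      ((q + r : ℚ) : AddCircle (1 : ℚ)) := fun _ _ => rfl
  have hq0 : ∀ q : ℚ, q = 0 → ((q : ℚ) : AddCircle (1 : ℚ)) = 0 := fun q h => by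
    rw [h]; rfl
  have base12 : l (f₀ (1, 0, 0)) (f₀ (0, 1, 0)) = l' (1, 0, 0) (0, 1, 0) := by
    rw [hfe1, hfe2, h2', decT1, decT2]
    simp only [map_add, map_zsmul, AddMonoidHom.add_apply, AddMonoidHom.smul_apply,
      h1, h2, h3, h2s, h3s, h4, h5, h5s, h6, smul_zero, add_zero, zero_add, hzc, hadd]
    apply hq0
    rw [pow_succ]
    field_simp
    norm_num
  have base13 : l (f₀ (1, 0, 0)) (f₀ (0, 0, 1)) = l' (1, 0, 0) (0, 0, 1) := by
    rw [hfe1, hfe3, h3', decT1, decT3]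
    simp only [map_add, map_zsmul, AddMonoidHom.add_apply, AddMonoidHom.smul_apply,
      h1, h2, h3, h2s, h3s, h4, h5, h5s, h6, smul_zero, add_zero, zero_add, hzc, hadd]
    apply hq0
    rw [pow_succ]
    field_simp
    norm_num
  have base22 : l (f₀ (0, 1, 0)) (f₀ (0, 1, 0)) = l' (0, 1, 0) (0, 1, 0) := by
    rw [hfe2, h4', decT2]
    simp only [map_add, map_zsmul, AddMonoidHom.add_apply, AddMonoidHom.smul_apply,
      h1, h2, h3, h2s, h3s, h4, h5, h5s, h6, smul_zero, add_zero, zero_add, hzc, hadd]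
    apply hq
    rw [pow_succ]
    field_simp
  have base23 : l (f₀ (0, 1, 0)) (f₀ (0, 0, 1)) = l' (0, 1, 0) (0, 0, 1) := by
    rw [hfe2, hfe3, h5', decT2, decT3]
    simp only [map_add, map_zsmul, AddMonoidHom.add_apply, AddMonoidHom.smul_apply,
      h1, h2, h3, h2s, h3s, h4, h5, h5s, h6, smul_zero, add_zero, zero_add, hzc, hadd]
    apply hq
    rw [pow_succ]
    field_simp
    ring
  have base33 : l (f₀ (0, 0, 1)) (f₀ (0, 0, 1)) = l' (0, 0, 1) (0, 0, 1) := by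
    rw [hfe3, h6', decT3]
    simp only [map_add, map_zsmul, AddMonoidHom.add_apply, AddMonoidHom.smul_apply,
      h1, h2, h3, h2s, h3s, h4, h5, h5s, h6, smul_zero, add_zero, zero_add, hzc, hadd]
    apply hq
    rw [pow_succ]
    field_simp
  have base21 : l (f₀ (0, 1, 0)) (f₀ (1, 0, 0)) = l' (0, 1, 0) (1, 0, 0) := by
    rw [hsymm, hsymm']; exact base12
  have base31 : l (f₀ (0, 0, 1)) (f₀ (1, 0, 0)) = l' (0, 0, 1) (1, 0, 0) := by
    rw [hsymm, hsymm']; exact base13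
  have base32 : l (f₀ (0, 0, 1)) (f₀ (0, 1, 0)) = l' (0, 0, 1) (0, 1, 0) := by
    rw [hsymm, hsymm']; exact base23
  have hvalA' : ∀ a : A, ((a.val : ℕ) : A) = a := fun a => ZMod.natCast_rightInverse a
  have hvalB' : ∀ b : B, ((b.val : ℕ) : B) = b := fun b => ZMod.natCast_rightInverse b
  have hdec : ∀ v : H, v = ((v.1.val : ℤ)) • ((1, 0, 0) : H) + ((v.2.1.val : ℤ)) • ((0, 1, 0) : H)
      + ((v.2.2.val : ℤ)) • ((0, 0, 1) : H) := by
    rintro ⟨a, b, c⟩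
    refine Prod.ext ?_ (Prod.ext ?_ ?_) <;>
      simp [zsmul_eq_mul, hvalA', hvalB'] <;>
      exact (ZMod.cast_id _ _).symm
  have main : ∀ x y : H, l (f₀ x) (f₀ y) = l' x y := by
    intro x y
    rw [hdec x, hdec y]
    simp only [map_add, map_zsmul, AddMonoidHom.add_apply, AddMonoidHom.smul_apply,
      base11, base12, base13, base21, base22, base23, base31, base32, base33]
  exact ⟨AddEquiv.ofBijective f₀ hbij, main, hfe1, hfe2, hfe3⟩
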